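/- Let α ∈ (1/2, 1) and λ > 2α/(1 − α). Let f : [0, ∞) → [0, ∞) be measurable and bounded, and suppose there exist constants K > 0 and T > 0 such that f(τ) ≤ K τ^{−2λ} for all τ ≥ T. Then ∫_0^t (t − τ)^{2α−2} f(τ) dτ → 0 as t → ∞. -/

import Mathlib

open MeasureTheory intervalIntegral Real Set Filter

theorem kernel_integral_tendsto_zero (α l : ℝ) (hα : α ∈ Set.Ioo (1 / 2 : ℝ) 1)
    (hl : 2 * α / (1 - α) < l)
    (f : ℝ → ℝ) (hmeas : Measurable f)
    (hnonneg : ∀ τ : ℝ, 0 ≤ τ → 0 ≤ f τ)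
    (hbdd : ∃ M : ℝ, ∀ τ : ℝ, 0 ≤ τ → f τ ≤ M)
    (K T : ℝ) (hK : 0 < K) (hT : 0 < T)
    (hdecay : ∀ τ : ℝ, T ≤ τ → f τ ≤ K * τ ^ (-(2 * l))) :
    Filter.Tendsto (fun t : ℝ => ∫ τ in (0:ℝ)..t, (t - τ) ^ (2 * α - 2) * f τ)
      Filter.atTop (nhds 0) := by
  obtain ⟨hα1, hα2⟩ := hα
  obtain ⟨M, hM⟩ := hbdd
  set a : ℝ := 2 * α - 2 with ha
  have ha0 : a < 0 := by simp only [ha]; linarith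
  have ha1 : (-1 : ℝ) < a := by simp only [ha]; linarith
  have haa : (0:ℝ) < a + 1 := by linarith
  have hM0 : 0 ≤ M := le_trans (hnonneg T hT.le) (hM T hT.le)
  have hl2 : (2:ℝ) < l := by
    have h1 : (1:ℝ) < 2 * α := by linarith
    have h2 : 0 < 1 - α := by linarith
    have : (2:ℝ) < 2 * α / (1 - α) := by
      rw [lt_div_iff₀ h2]; nlinarith
    linarith
  have hl1 : (1:ℝ) < 2 * l := by linarith
  -- the bounding function
  set B : ℝ → ℝ := fun t =>
    T * M * (t - T) ^ a + K * T ^ (1 - 2*l) / (2*l - 1) * (t/2) ^ a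
      + K / (a+1) * (t/2) ^ (a + 1 - 2*l) with hB
  have hBtend : Tendsto B atTop (nhds 0) := by
    have h1 : Tendsto (fun t : ℝ => (t - T) ^ a) atTop (nhds 0) := by
      have := (tendsto_rpow_neg_atTop (y := -a) (by linarith)).comp
        (tendsto_atTop_add_const_right atTop (-T) tendsto_id)
      simpa [Function.comp_def, sub_eq_add_neg] using this
    have hhalf : Tendsto (fun t : ℝ => t / 2) atTop atTop :=
      tendsto_id.atTop_div_const (by norm_num)
    have h2 : Tendsto (fun t : ℝ => (t/2) ^ a) atTop (nhds 0) := by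
      have := (tendsto_rpow_neg_atTop (y := -a) (by linarith)).comp hhalf
      simpa [Function.comp_def] using this
    have h3 : Tendsto (fun t : ℝ => (t/2) ^ (a + 1 - 2*l)) atTop (nhds 0) := by
      have := (tendsto_rpow_neg_atTop (y := -(a + 1 - 2*l)) (by linarith)).comp hhalf
      simpa [Function.comp_def] using this
    have := ((h1.const_mul (T * M)).add (h2.const_mul (K * T ^ (1 - 2*l) / (2*l - 1)))).add
      (h3.const_mul (K / (a+1)))
    simpa using this
  apply tendsto_of_tendsto_of_tendsto_of_le_of_le' tendsto_const_nhds hBtend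
  · -- 0 ≤ F t eventually
    filter_upwards [eventually_ge_atTop (0:ℝ)] with t ht
    apply intervalIntegral.integral_nonneg ht
    intro u hu
    exact mul_nonneg (rpow_nonneg (by linarith [hu.2]) _) (hnonneg u hu.1)
  · -- F t ≤ B t eventually
    filter_upwards [eventually_ge_atTop (2*T + 2)] with t ht
    have htpos : (0:ℝ) < t := by linarith
    have hhpos : (0:ℝ) < t/2 := by linarith
    have hTt2 : T ≤ t/2 := by linarith
    have htT : (0:ℝ) < t - T := by linarith
    set g : ℝ → ℝ := fun τ => (t - τ) ^ a * f τ with hg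
    -- integrability of g on subintervals of [0, t]
    have hkint : ∀ u v : ℝ, 0 ≤ u → v ≤ t →
        IntervalIntegrable (fun τ => (t - τ) ^ a) volume u v := by
      intro u v hu hv
      have := (intervalIntegrable_rpow' (a := t - u) (b := t - v) ha1).comp_sub_left t
      simpa using this
    have hgm : Measurable g :=
      ((measurable_const.sub measurable_id).pow_const a).mul hmeas
    have hgint : ∀ u v : ℝ, 0 ≤ u → u ≤ v → v ≤ t →
        IntervalIntegrable g volume u v := by
      intro u v hu huv hv
      rw [intervalIntegrable_iff_integrableOn_Ioc_of_le huv]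
      apply Integrable.mono' (g := fun τ => M * (t - τ) ^ a)
      · exact (hkint u v hu hv).1.const_mul M
      · exact hgm.aestronglyMeasurable
      · filter_upwards [ae_restrict_mem measurableSet_Ioc] with τ hτ
        have h1 : 0 ≤ t - τ := by linarith [hτ.2]
        have h2 : 0 ≤ (t - τ) ^ a := rpow_nonneg h1 a
        have h3 : 0 ≤ τ := le_trans hu hτ.1.le
        rw [Real.norm_eq_abs, abs_of_nonneg (mul_nonneg h2 (hnonneg τ h3))]
        rw [mul_comm M]
        exact mul_le_mul_of_nonneg_left (hM τ h3) h2
    -- split the integral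
    have hsplit : ∫ τ in (0:ℝ)..t, g τ =
        (∫ τ in (0:ℝ)..T, g τ) + (∫ τ in T..(t/2), g τ) + ∫ τ in (t/2)..t, g τ := by
      rw [integral_add_adjacent_intervals (hgint 0 T le_rfl hT.le (by linarith))
        (hgint T (t/2) hT.le hTt2 (by linarith)),
        integral_add_adjacent_intervals (hgint 0 (t/2) le_rfl hhpos.le (by linarith))
        (hgint (t/2) t hhpos.le (by linarith) le_rfl)]
    have hP1 : (∫ τ in (0:ℝ)..T, g τ) ≤ T * M * (t - T) ^ a := by
      have hle : (∫ τ in (0:ℝ)..T, g τ) ≤ ∫ _τ in (0:ℝ)..T, (t - T) ^ a * M := by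
        apply integral_mono_on hT.le (hgint 0 T le_rfl hT.le (by linarith))
          intervalIntegrable_const
        intro τ hτ
        exact mul_le_mul (rpow_le_rpow_of_nonpos htT (by linarith [hτ.2]) ha0.le)
          (hM τ hτ.1) (hnonneg τ hτ.1) (rpow_nonneg htT.le a)
      rw [intervalIntegral.integral_const, smul_eq_mul, sub_zero] at hle
      calc (∫ τ in (0:ℝ)..T, g τ) ≤ T * ((t - T) ^ a * M) := hle
        _ = T * M * (t - T) ^ a := by ring
    have hP2 : (∫ τ in T..(t/2), g τ) ≤ K * T ^ (1 - 2*l) / (2*l - 1) * (t/2) ^ a := by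
      have h0mem : (0:ℝ) ∉ Set.uIcc T (t/2) := Set.notMem_uIcc_of_lt hT (by linarith)
      have hrint : IntervalIntegrable (fun τ : ℝ => (t/2) ^ a * (K * τ ^ (-(2*l))))
          volume T (t/2) :=
        (((intervalIntegrable_rpow (r := -(2*l)) (Or.inr h0mem)).const_mul K).const_mul
          ((t/2) ^ a))
      have hle : (∫ τ in T..(t/2), g τ) ≤ ∫ τ in T..(t/2), (t/2) ^ a * (K * τ ^ (-(2*l))) := by
        apply integral_mono_on hTt2 (hgint T (t/2) hT.le hTt2 (by linarith)) hrint
        intro τ hτ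
        have hτ0 : 0 < τ := lt_of_lt_of_le hT hτ.1
        exact mul_le_mul (rpow_le_rpow_of_nonpos hhpos (by linarith [hτ.2]) ha0.le)
          (hdecay τ hτ.1) (hnonneg τ hτ0.le)
          (rpow_nonneg hhpos.le a)
      have hval : (∫ τ in T..(t/2), (t/2) ^ a * (K * τ ^ (-(2*l))))
          = (t/2) ^ a * (K * (((t/2) ^ (-(2*l)+1) - T ^ (-(2*l)+1)) / (-(2*l)+1))) := by
        rw [intervalIntegral.integral_const_mul, intervalIntegral.integral_const_mul,
          integral_rpow (Or.inr ⟨by intro h; rw [neg_eq_iff_eq_neg] at h; nlinarith, h0mem⟩)]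
      rw [hval] at hle
      have hkey : (t/2) ^ a * (K * (((t/2) ^ (-(2*l)+1) - T ^ (-(2*l)+1)) / (-(2*l)+1)))
          ≤ K * T ^ (1 - 2*l) / (2*l - 1) * (t/2) ^ a := by
        have h1 : ((t/2) ^ (-(2*l)+1) - T ^ (-(2*l)+1)) / (-(2*l)+1)
            = (T ^ (1-2*l) - (t/2) ^ (1-2*l)) / (2*l - 1) := by
          rw [show -(2*l)+1 = 1-2*l by ring]
          rw [div_eq_div_iff (by linarith) (by linarith)]
          ring
        rw [h1]
        have h2 : (T ^ (1-2*l) - (t/2) ^ (1-2*l)) / (2*l - 1) ≤ T ^ (1-2*l) / (2*l-1) := by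
          apply div_le_div_of_nonneg_right _ (by linarith)
          have := rpow_nonneg hhpos.le (1-2*l)
          linarith
        calc (t/2) ^ a * (K * ((T ^ (1-2*l) - (t/2) ^ (1-2*l)) / (2*l - 1)))
            ≤ (t/2) ^ a * (K * (T ^ (1-2*l) / (2*l-1))) := by
              apply mul_le_mul_of_nonneg_left _ (rpow_nonneg hhpos.le a)
              exact mul_le_mul_of_nonneg_left h2 hK.le
          _ = K * T ^ (1 - 2*l) / (2*l - 1) * (t/2) ^ a := by ring
      exact hle.trans hkey
    have hP3 : (∫ τ in (t/2)..t, g τ) ≤ K / (a+1) * (t/2) ^ (a + 1 - 2*l) := by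
      have hle : (∫ τ in (t/2)..t, g τ)
          ≤ ∫ τ in (t/2)..t, (t - τ) ^ a * (K * (t/2) ^ (-(2*l))) := by
        apply integral_mono_on (by linarith) (hgint (t/2) t hhpos.le (by linarith) le_rfl)
          ((hkint (t/2) t hhpos.le le_rfl).mul_const _)
        intro τ hτ
        have hτ0 : 0 < τ := lt_of_lt_of_le hhpos hτ.1
        have hker : 0 ≤ (t - τ) ^ a := rpow_nonneg (by linarith [hτ.2]) a
        apply mul_le_mul_of_nonneg_left _ hker
        calc f τ ≤ K * τ ^ (-(2*l)) := hdecay τ (hTt2.trans hτ.1)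
          _ ≤ K * (t/2) ^ (-(2*l)) := by
              apply mul_le_mul_of_nonneg_left _ hK.le
              exact rpow_le_rpow_of_nonpos hhpos hτ.1 (by linarith)
      have hval : (∫ τ in (t/2)..t, (t - τ) ^ a * (K * (t/2) ^ (-(2*l))))
          = ((t/2) ^ (a+1) / (a+1)) * (K * (t/2) ^ (-(2*l))) := by
        rw [intervalIntegral.integral_mul_const]
        congr 1
        have := integral_comp_sub_left (a := t/2) (b := t) (fun x => x ^ a) t
        simp only [sub_self, sub_half] at this
        rw [this, integral_rpow (Or.inl ha1), Real.zero_rpow (by linarith), sub_zero]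
      rw [hval] at hle
      have hkey : ((t/2) ^ (a+1) / (a+1)) * (K * (t/2) ^ (-(2*l)))
          = K / (a+1) * (t/2) ^ (a + 1 - 2*l) := by
        have e1 : (t/2:ℝ) ^ (a + 1 - 2*l) = (t/2) ^ (a+1) * (t/2) ^ (-(2*l)) := by
          rw [← Real.rpow_add hhpos]
          congr 1
        rw [e1]
        generalize (t/2 : ℝ) ^ (a+1) = X
        generalize (t/2 : ℝ) ^ (-(2*l)) = Y
        ring
      rw [hkey] at hle
      exact hle
    show (∫ τ in (0:ℝ)..t, g τ) ≤ B t
    rw [hsplit]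
    exact add_le_add (add_le_add hP1 hP2) hP3
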